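/- Let Ξ ⊆ Δ^Ω be nonempty compact and P̂^ω transition matrices indexed by finite Ω. Define c(ξ) = ρ(π, Σ_ω ξ_ω P̂^ω) for fixed policy π. If all per-model occupancy frequencies coincide, i.e., h^ω_π = h_π for all ω ∈ Ω, then c is affine on Ξ and min_{ξ∈Ξ} E_{ω∼ξ}[ρ(π, P̂^ω)] = min_{ξ∈Ξ} ρ(π, Σ_ω ξ_ω P̂^ω), i.e., the static and dynamic soft-robust returns are equal. -/
import Mathlib
open Matrix

lemma aux_unit {S : Type*} [Fintype S] [DecidableEq S]
    (P : Matrix S S ℝ) (h0 : ∀ s s', 0 ≤ P s s') (h1 : ∀ s, ∑ s', P s s' = 1)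
    {γ : ℝ} (hγ0 : 0 ≤ γ) (hγ1 : γ < 1) : IsUnit (1 - γ • P) := by
  rw [← Matrix.mulVec_injective_iff_isUnit]
  have hker : ∀ x : S → ℝ, (1 - γ • P).mulVec x = 0 → x = 0 := by
    intro x hx
    cases isEmpty_or_nonempty S with
    | inl h => funext s; exact isEmptyElim s
    | inr h =>
      obtain ⟨j, -, hj⟩ := Finset.exists_max_image Finset.univ (fun s => |x s|)
        Finset.univ_nonempty
      have hxj : ∀ s, x s = γ * ∑ s', P s s' * x s' := by
        intro s
        have h' := congrFun hx s
        have h2 : x s - γ * ∑ s', P s s' * x s' = 0 := by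
          simpa [Matrix.sub_mulVec, Matrix.one_mulVec, Matrix.smul_mulVec,
            Matrix.mulVec, dotProduct, Finset.mul_sum, sub_mul,
            Finset.sum_sub_distrib, Matrix.one_apply, Finset.sum_ite_eq',
            mul_assoc] using h'
        linarith
      have hle : |x j| ≤ γ * |x j| := by
        calc |x j| = γ * |∑ s', P j s' * x s'| := by
              rw [hxj j, abs_mul, abs_of_nonneg hγ0]
          _ ≤ γ * ∑ s', P j s' * |x j| := by
              apply mul_le_mul_of_nonneg_left _ hγ0
              calc |∑ s', P j s' * x s'| ≤ ∑ s', |P j s' * x s'| :=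
                    Finset.abs_sum_le_sum_abs _ _
                _ ≤ ∑ s', P j s' * |x j| := by
                    apply Finset.sum_le_sum
                    intro i _
                    rw [abs_mul, abs_of_nonneg (h0 j i)]
                    exact mul_le_mul_of_nonneg_left (hj i (Finset.mem_univ i)) (h0 j i)
          _ = γ * |x j| := by rw [← Finset.sum_mul, h1 j, one_mul]
      have hxj0 : |x j| = 0 := by nlinarith [abs_nonneg (x j)]
      funext s
      have := hj s (Finset.mem_univ s)
      have : |x s| ≤ 0 := hxj0 ▸ this
      simpa using le_antisymm this (abs_nonneg _)
  intro a b hab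
  have : (1 - γ • P).mulVec (a - b) = 0 := by
    simp [Matrix.mulVec_sub, hab]
  have := hker _ this
  exact sub_eq_zero.mp this

lemma aux_sum_mulVec {S Ω : Type*} [Fintype S] [Fintype Ω]
    (M : Ω → Matrix S S ℝ) (v : S → ℝ) :
    (∑ ω, M ω).mulVec v = ∑ ω, (M ω).mulVec v := by
  ext s
  simp [Matrix.mulVec, dotProduct, Finset.sum_mul, Finset.sum_apply,
    Matrix.sum_apply]
  rw [Finset.sum_comm]

lemma aux_rho {S : Type*} [Fintype S] [DecidableEq S]
    (A : Matrix S S ℝ) {γ : ℝ} (hU : IsUnit (1 - γ • A))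
    (p0 r h : S → ℝ) (hmul : (1 - γ • Aᵀ).mulVec h = p0) :
    ∑ s, p0 s * ((1 - γ • A)⁻¹).mulVec r s = h ⬝ᵥ r := by
  have htp : (1 - γ • A)ᵀ = 1 - γ • Aᵀ := by
    rw [Matrix.transpose_sub, Matrix.transpose_smul, Matrix.transpose_one]
  have hUT : IsUnit ((1 - γ • A)ᵀ) := (Matrix.isUnit_transpose _).mpr hU
  have key : ((1 - γ • A)ᵀ)⁻¹.mulVec p0 = h := by
    rw [← hmul, ← htp, Matrix.mulVec_mulVec,
      Matrix.nonsing_inv_mul _ ((Matrix.isUnit_iff_isUnit_det _).mp hUT),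
      Matrix.one_mulVec]
  calc ∑ s, p0 s * ((1 - γ • A)⁻¹).mulVec r s
      = p0 ⬝ᵥ ((1 - γ • A)⁻¹).mulVec r := rfl
    _ = (((1 - γ • A)⁻¹)ᵀ.mulVec p0) ⬝ᵥ r := by
        rw [Matrix.dotProduct_mulVec, Matrix.mulVec_transpose]
    _ = h ⬝ᵥ r := by rw [Matrix.transpose_nonsing_inv, key]

theorem stmt_19 {S Ω : Type*} [Fintype S] [DecidableEq S] [Fintype Ω] [Nonempty Ω]
    (Phat : Ω → Matrix S S ℝ)
    (hPhat : ∀ ω, (∀ s s', 0 ≤ Phat ω s s') ∧ ∀ s, ∑ s', Phat ω s s' = 1)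
    (γ : ℝ) (hγ0 : 0 ≤ γ) (hγ1 : γ < 1)
    (p0 : S → ℝ) (hp00 : ∀ s, 0 ≤ p0 s) (hp01 : ∑ s, p0 s = 1)
    (r : S → ℝ)
    (Ξ : Set (Ω → ℝ)) (hΞne : Ξ.Nonempty) (hΞc : IsCompact Ξ)
    (hΞ : ∀ ξ ∈ Ξ, (∀ ω, 0 ≤ ξ ω) ∧ ∑ ω, ξ ω = 1)
    (c : (Ω → ℝ) → ℝ)
    (hc : c = fun ξ => ∑ s, p0 s * ((1 - γ • (∑ ω, ξ ω • Phat ω))⁻¹).mulVec r s)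
    (hocc : ∀ ω1 ω2 : Ω,
      ((1 - γ • (Phat ω1)ᵀ)⁻¹).mulVec p0 = ((1 - γ • (Phat ω2)ᵀ)⁻¹).mulVec p0) :
    (∀ ξ1 ∈ Ξ, ∀ ξ2 ∈ Ξ, ∀ t : ℝ, 0 ≤ t → t ≤ 1 →
        c (t • ξ1 + (1 - t) • ξ2) = t * c ξ1 + (1 - t) * c ξ2) ∧
    sInf {v : ℝ | ∃ ξ ∈ Ξ, v =
        ∑ ω, ξ ω * ∑ s, p0 s * ((1 - γ • Phat ω)⁻¹).mulVec r s}
      = sInf {v : ℝ | ∃ ξ ∈ Ξ, v = c ξ} := by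
  classical
  set ω₀ : Ω := Classical.arbitrary Ω with hω₀
  set h : S → ℝ := ((1 - γ • (Phat ω₀)ᵀ)⁻¹).mulVec p0 with hh
  have hU : ∀ ω, IsUnit (1 - γ • Phat ω) :=
    fun ω => aux_unit (Phat ω) (hPhat ω).1 (hPhat ω).2 hγ0 hγ1
  have htp : ∀ ω, (1 - γ • Phat ω)ᵀ = 1 - γ • (Phat ω)ᵀ := by
    intro ω
    rw [Matrix.transpose_sub, Matrix.transpose_smul, Matrix.transpose_one]
  have hUT : ∀ ω, IsUnit (1 - γ • (Phat ω)ᵀ) := by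
    intro ω; rw [← htp]; exact (Matrix.isUnit_transpose _).mpr (hU ω)
  -- per-model occupancy equation
  have hmul : ∀ ω, (1 - γ • (Phat ω)ᵀ).mulVec h = p0 := by
    intro ω
    rw [hh, hocc ω₀ ω, Matrix.mulVec_mulVec,
      Matrix.mul_nonsing_inv _ ((Matrix.isUnit_iff_isUnit_det _).mp (hUT ω)),
      Matrix.one_mulVec]
  -- per-model return is h ⬝ᵥ r
  have hrho : ∀ ω, ∑ s, p0 s * ((1 - γ • Phat ω)⁻¹).mulVec r s = h ⬝ᵥ r :=
    fun ω => aux_rho (Phat ω) (hU ω) p0 r h (hmul ω)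
  -- mixture return is h ⬝ᵥ r for any ξ in the simplex
  have hcval : ∀ ξ : Ω → ℝ, (∀ ω, 0 ≤ ξ ω) → (∑ ω, ξ ω) = 1 → c ξ = h ⬝ᵥ r := by
    intro ξ hξ0 hξ1
    set Pm : Matrix S S ℝ := ∑ ω, ξ ω • Phat ω with hPm
    have hPm0 : ∀ s s', 0 ≤ Pm s s' := by
      intro s s'
      rw [hPm]
      simp only [Matrix.sum_apply, Matrix.smul_apply, smul_eq_mul]
      exact Finset.sum_nonneg fun ω _ => mul_nonneg (hξ0 ω) ((hPhat ω).1 s s')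
    have hPm1 : ∀ s, ∑ s', Pm s s' = 1 := by
      intro s
      rw [hPm]
      simp only [Matrix.sum_apply, Matrix.smul_apply, smul_eq_mul]
      rw [Finset.sum_comm]
      calc ∑ ω, ∑ s', ξ ω * Phat ω s s'
          = ∑ ω, ξ ω * ∑ s', Phat ω s s' := by
            simp [Finset.mul_sum]
        _ = 1 := by simp only [(hPhat _).2]; simpa using hξ1
    have hUm : IsUnit (1 - γ • Pm) := aux_unit Pm hPm0 hPm1 hγ0 hγ1
    have hmulm : (1 - γ • Pmᵀ).mulVec h = p0 := by
      have hPmT : Pmᵀ = ∑ ω, ξ ω • (Phat ω)ᵀ := by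
        rw [hPm, Matrix.transpose_sum]
        simp [Matrix.transpose_smul]
      have hstep : γ • Pmᵀ.mulVec h = h - p0 := by
        rw [hPmT, aux_sum_mulVec, Finset.smul_sum]
        have : ∀ ω : Ω, γ • ((ξ ω • (Phat ω)ᵀ).mulVec h) = ξ ω • (h - p0) := by
          intro ω
          have h1 : γ • ((Phat ω)ᵀ.mulVec h) = h - p0 := by
            have := hmul ω
            rw [Matrix.sub_mulVec, Matrix.one_mulVec, Matrix.smul_mulVec] at this
            rw [← this, sub_sub_cancel]
          rw [Matrix.smul_mulVec, smul_comm, h1]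
        rw [Finset.sum_congr rfl fun ω _ => this ω, ← Finset.sum_smul, hξ1, one_smul]
      rw [Matrix.sub_mulVec, Matrix.one_mulVec, Matrix.smul_mulVec, hstep,
        sub_sub_cancel]
    rw [hc]
    exact aux_rho Pm hUm p0 r h hmulm
  constructor
  · intro ξ1 hξ1 ξ2 hξ2 t ht0 ht1
    have h1 := hΞ ξ1 hξ1
    have h2 := hΞ ξ2 hξ2
    have hmix0 : ∀ ω, 0 ≤ (t • ξ1 + (1 - t) • ξ2) ω := by
      intro ω
      simp only [Pi.add_apply, Pi.smul_apply, smul_eq_mul]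
      have := h1.1 ω; have := h2.1 ω
      nlinarith
    have hmix1 : ∑ ω, (t • ξ1 + (1 - t) • ξ2) ω = 1 := by
      simp only [Pi.add_apply, Pi.smul_apply, smul_eq_mul]
      rw [Finset.sum_add_distrib, ← Finset.mul_sum, ← Finset.mul_sum, h1.2, h2.2]
      ring
    rw [hcval _ hmix0 hmix1, hcval _ h1.1 h1.2, hcval _ h2.1 h2.2]
    ring
  · have hset1 : {v : ℝ | ∃ ξ ∈ Ξ, v =
        ∑ ω, ξ ω * ∑ s, p0 s * ((1 - γ • Phat ω)⁻¹).mulVec r s} = {h ⬝ᵥ r} := by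
      ext v
      simp only [Set.mem_setOf_eq, Set.mem_singleton_iff]
      constructor
      · rintro ⟨ξ, hξ, rfl⟩
        calc ∑ ω, ξ ω * ∑ s, p0 s * ((1 - γ • Phat ω)⁻¹).mulVec r s
            = ∑ ω, ξ ω * (h ⬝ᵥ r) := by
              exact Finset.sum_congr rfl fun ω _ => by rw [hrho ω]
          _ = h ⬝ᵥ r := by rw [← Finset.sum_mul, (hΞ ξ hξ).2, one_mul]
      · rintro rfl
        obtain ⟨ξ, hξ⟩ := hΞne
        exact ⟨ξ, hξ, by
          rw [show ∑ ω, ξ ω * ∑ s, p0 s * ((1 - γ • Phat ω)⁻¹).mulVec r s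
              = ∑ ω, ξ ω * (h ⬝ᵥ r) from
              Finset.sum_congr rfl fun ω _ => by rw [hrho ω],
            ← Finset.sum_mul, (hΞ ξ hξ).2, one_mul]⟩
    have hset2 : {v : ℝ | ∃ ξ ∈ Ξ, v = c ξ} = {h ⬝ᵥ r} := by
      ext v
      simp only [Set.mem_setOf_eq, Set.mem_singleton_iff]
      constructor
      · rintro ⟨ξ, hξ, rfl⟩
        exact hcval ξ (hΞ ξ hξ).1 (hΞ ξ hξ).2
      · rintro rfl
        obtain ⟨ξ, hξ⟩ := hΞne
        exact ⟨ξ, hξ, (hcval ξ (hΞ ξ hξ).1 (hΞ ξ hξ).2).symm⟩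
    rw [hset1, hset2]
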